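/- Let A, B ∈ ℤ with 4A³ + 27B² ≠ 0 and Q(u,v) = u(v³ + Au²v + Bu³). There exists a constant depending only on A and B such that for every (u,v) ∈ ℤ² with Q(u,v) squarefree, the quantity η_{Q(u,v)}(A,B) satisfies η_{Q(u,v)}(A,B) ≪ max{|u|^{1/2}, |v|^{1/2}}, provided max{|u|, |v|} is larger than a constant depending at most on A and B; in particular the point (uv:1:u²) on E_{Q(u,v)} is non-torsion for such (u,v). -/

import Mathlib

open Filter
open Topology

/-- numerator of the duplication map, `F(p,q) = p⁴ - 2Ap²q² - 8Bpq³ + A²q⁴`. -/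
def Fq (A B p q : ℤ) : ℤ := p^4 - 2*A*p^2*q^2 - 8*B*p*q^3 + A^2*q^4
/-- denominator of the duplication map, `G(p,q) = 4q(p³ + Apq² + Bq³)`. -/
def Gq (A B p q : ℤ) : ℤ := 4*q*(p^3 + A*p*q^2 + B*q^3)

/-- One duplication step on the x-coordinate, as a map `ℚ → ℚ`. -/
noncomputable def stepQ (A B : ℤ) (x : ℚ) : ℚ :=
  (Fq A B x.num x.den : ℚ) / (Gq A B x.num x.den : ℚ)

lemma idq (A B p q : ℤ) :
    (12*p^2*q + 16*A*q^3) * Fq A B p q - (3*p^3 - 5*A*p*q^2 - 27*B*q^3) * Gq A B p q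
      = 4*(4*A^3 + 27*B^2) * q^7 := by
  simp only [Fq, Gq]; ring

lemma idp (A B p q : ℤ) :
    (4*(4*A^3+27*B^2)*p^3 - 4*A^2*B*p^2*q + (12*A^4+88*A*B^2)*p*q^2 + (12*A^3*B+96*B^3)*q^3)
        * Fq A B p q
      - (-(A^2*B)*p^3 - (5*A^4+32*A*B^2)*p^2*q - (26*A^3*B+192*B^3)*p*q^2
          + (3*A^5+24*A^2*B^2)*q^3) * Gq A B p q
      = 4*(4*A^3+27*B^2) * p^7 := by
  simp only [Fq, Gq]; ring

/-- Structure lemma: for `b ≠ 0`, `a` and `b` are common multiples of the reduced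
numerator and denominator of `a/b`, with the same cofactor. -/
lemma rat_div_struct (a b : ℤ) (hb : b ≠ 0) :
    ∃ k : ℤ, k ≠ 0 ∧ a = ((a:ℚ)/(b:ℚ)).num * k ∧ b = (((a:ℚ)/(b:ℚ)).den : ℤ) * k := by
  set x : ℚ := (a:ℚ)/(b:ℚ) with hx
  have hbQ : (b:ℚ) ≠ 0 := Int.cast_ne_zero.mpr hb
  have hdQ : ((x.den : ℤ) : ℚ) ≠ 0 := by exact_mod_cast x.den_nz
  have hxb : x * b = a := div_mul_cancel₀ _ hbQ
  have hnd : (x.num : ℚ) / (x.den : ℚ) = x := Rat.num_div_den x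
  have key : x.num * b = a * (x.den : ℤ) := by
    have : (x.num : ℚ) * b = (a : ℚ) * (x.den : ℚ) := by
      rw [← hnd] at hxb; field_simp at hxb ⊢; linarith [hxb]
    exact_mod_cast this
  have hcop : IsCoprime x.num (x.den : ℤ) := by
    rw [Int.isCoprime_iff_gcd_eq_one]
    simpa [Int.gcd] using x.reduced
  have hdvd : (x.den : ℤ) ∣ b := by
    have h1 : (x.den : ℤ) ∣ x.num * b := ⟨a, by linarith [key]⟩
    exact (hcop.symm.dvd_of_dvd_mul_left h1)
  obtain ⟨k, hk⟩ := hdvd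
  have hdZ : (x.den : ℤ) ≠ 0 := by exact_mod_cast x.den_nz
  refine ⟨k, ?_, ?_, hk⟩
  · rintro rfl; exact hb (by simpa using hk)
  · have : (x.den : ℤ) * (x.num * k) = (x.den : ℤ) * a := by
      rw [hk] at key; linarith [key]
    have := mul_left_cancel₀ hdZ this
    linarith [this]

/-- Real-valued multiplicative height of a rational. -/
noncomputable def HQr (x : ℚ) : ℝ := max |(x.num : ℝ)| (x.den : ℝ)

lemma one_le_HQr (x : ℚ) : 1 ≤ HQr x :=
  le_max_of_le_right (by exact_mod_cast x.pos)

lemma HQr_pos (x : ℚ) : 0 < HQr x := lt_of_lt_of_le one_pos (one_le_HQr x)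

lemma abs_num_le (x : ℚ) : |(x.num : ℝ)| ≤ HQr x := le_max_left _ _
lemma den_le (x : ℚ) : (x.den : ℝ) ≤ HQr x := le_max_right _ _

/-- Generic bound for a homogeneous cubic. -/
lemma cubic_bound (c0 c1 c2 c3 p q T : ℝ) (hp : |p| ≤ T) (hq : |q| ≤ T) :
    |c0*p^3 + c1*p^2*q + c2*p*q^2 + c3*q^3| ≤ (|c0|+|c1|+|c2|+|c3|) * T^3 := by
  have hT : 0 ≤ T := le_trans (abs_nonneg p) hp
  have h0 : |c0*p^3| ≤ |c0| * T^3 := by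
    rw [abs_mul, abs_pow]; gcongr <;> first | exact hp | exact hq | positivity
  have h1 : |c1*p^2*q| ≤ |c1| * T^3 := by
    rw [abs_mul, abs_mul, abs_pow]
    calc |c1| * |p|^2 * |q| ≤ |c1| * T^2 * T := by gcongr <;> first | exact hp | exact hq | positivity
    _ = |c1| * T^3 := by ring
  have h2 : |c2*p*q^2| ≤ |c2| * T^3 := by
    rw [abs_mul, abs_mul, abs_pow]
    calc |c2| * |p| * |q|^2 ≤ |c2| * T * T^2 := by gcongr <;> first | exact hp | exact hq | positivity
    _ = |c2| * T^3 := by ring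
  have h3 : |c3*q^3| ≤ |c3| * T^3 := by
    rw [abs_mul, abs_pow]; gcongr <;> first | exact hp | exact hq | positivity
  calc |c0*p^3 + c1*p^2*q + c2*p*q^2 + c3*q^3|
      ≤ |c0*p^3 + c1*p^2*q + c2*p*q^2| + |c3*q^3| := abs_add_le _ _
    _ ≤ |c0*p^3 + c1*p^2*q| + |c2*p*q^2| + |c3*q^3| := by gcongr; exact abs_add_le _ _
    _ ≤ |c0*p^3| + |c1*p^2*q| + |c2*p*q^2| + |c3*q^3| := by gcongr; exact abs_add_le _ _
    _ ≤ (|c0|+|c1|+|c2|+|c3|) * T^3 := by rw [add_mul, add_mul, add_mul]; gcongr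

/-- Generic bound for a homogeneous quartic. -/
lemma quartic_bound (c0 c1 c2 c3 c4 p q T : ℝ) (hp : |p| ≤ T) (hq : |q| ≤ T) :
    |c0*p^4 + c1*p^3*q + c2*p^2*q^2 + c3*p*q^3 + c4*q^4|
      ≤ (|c0|+|c1|+|c2|+|c3|+|c4|) * T^4 := by
  have hT : 0 ≤ T := le_trans (abs_nonneg p) hp
  have h0 : |c0*p^4| ≤ |c0| * T^4 := by
    rw [abs_mul, abs_pow]; gcongr <;> first | exact hp | exact hq | positivity
  have h1 : |c1*p^3*q| ≤ |c1| * T^4 := by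
    rw [abs_mul, abs_mul, abs_pow]
    calc |c1| * |p|^3 * |q| ≤ |c1| * T^3 * T := by gcongr <;> first | exact hp | exact hq | positivity
    _ = |c1| * T^4 := by ring
  have h2 : |c2*p^2*q^2| ≤ |c2| * T^4 := by
    rw [abs_mul, abs_mul, abs_pow, abs_pow]
    calc |c2| * |p|^2 * |q|^2 ≤ |c2| * T^2 * T^2 := by
          gcongr <;> first | exact hp | exact hq | positivity
    _ = |c2| * T^4 := by ring
  have h3 : |c3*p*q^3| ≤ |c3| * T^4 := by
    rw [abs_mul, abs_mul, abs_pow]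
    calc |c3| * |p| * |q|^3 ≤ |c3| * T * T^3 := by gcongr <;> first | exact hp | exact hq | positivity
    _ = |c3| * T^4 := by ring
  have h4 : |c4*q^4| ≤ |c4| * T^4 := by
    rw [abs_mul, abs_pow]; gcongr <;> first | exact hp | exact hq | positivity
  calc |c0*p^4 + c1*p^3*q + c2*p^2*q^2 + c3*p*q^3 + c4*q^4|
      ≤ |c0*p^4 + c1*p^3*q + c2*p^2*q^2 + c3*p*q^3| + |c4*q^4| := abs_add_le _ _
    _ ≤ |c0*p^4 + c1*p^3*q + c2*p^2*q^2| + |c3*p*q^3| + |c4*q^4| := by gcongr; exact abs_add_le _ _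
    _ ≤ |c0*p^4 + c1*p^3*q| + |c2*p^2*q^2| + |c3*p*q^3| + |c4*q^4| := by gcongr; exact abs_add_le _ _
    _ ≤ |c0*p^4| + |c1*p^3*q| + |c2*p^2*q^2| + |c3*p*q^3| + |c4*q^4| := by
          gcongr; exact abs_add_le _ _
    _ ≤ (|c0|+|c1|+|c2|+|c3|+|c4|) * T^4 := by
          rw [add_mul, add_mul, add_mul, add_mul]; gcongr

lemma num_eq_mul_den (x : ℚ) : (x.num : ℚ) = x * (x.den : ℚ) := by
  have hd : (x.den:ℚ) ≠ 0 := by exact_mod_cast x.den_nz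
  have h := Rat.num_div_den x
  rw [div_eq_iff hd] at h
  rw [h]

lemma Fq_cast (A B : ℤ) (x : ℚ) :
    ((Fq A B x.num x.den : ℤ) : ℚ) = (x.den:ℚ)^4 * (x^4 - 2*A*x^2 - 8*B*x + A^2) := by
  simp only [Fq]; push_cast; rw [num_eq_mul_den x]; ring

lemma Gq_cast (A B : ℤ) (x : ℚ) :
    ((Gq A B x.num x.den : ℤ) : ℚ) = (x.den:ℚ)^4 * (4*(x^3 + A*x + B)) := by
  simp only [Gq]; push_cast; rw [num_eq_mul_den x]; ring

lemma den_pow_ne (x : ℚ) : ((x.den:ℚ))^4 ≠ 0 := by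
  have : (x.den:ℚ) ≠ 0 := by exact_mod_cast x.den_nz
  positivity

lemma Gq_ne_iff (A B : ℤ) (x : ℚ) :
    Gq A B x.num x.den ≠ 0 ↔ x^3 + A*x + B ≠ 0 := by
  rw [not_iff_not]
  constructor
  · intro h
    have : ((Gq A B x.num x.den : ℤ) : ℚ) = 0 := by exact_mod_cast h
    rw [Gq_cast] at this
    rcases mul_eq_zero.mp this with h' | h'
    · exact absurd h' (den_pow_ne x)
    · rcases mul_eq_zero.mp h' with h'' | h''
      · norm_num at h''
      · exact h''
  · intro h
    have : ((Gq A B x.num x.den : ℤ) : ℚ) = 0 := by rw [Gq_cast, h]; ring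
    exact_mod_cast this

lemma stepQ_eq (A B : ℤ) (x : ℚ) (hf : x^3 + A*x + B ≠ 0) :
    stepQ A B x = (x^4 - 2*A*x^2 - 8*B*x + A^2) / (4*(x^3 + A*x + B)) := by
  rw [stepQ, Fq_cast, Gq_cast, mul_div_mul_left _ _ (den_pow_ne x)]

/-- rational roots of `x³+Ax+B` have bounded height. -/
lemma root_bound (A B : ℤ) (x : ℚ) (hx : x^3 + (A:ℚ)*x + B = 0) :
    HQr x ≤ 1 + |(A:ℝ)| + |(B:ℝ)| := by
  have hGz : Gq A B x.num x.den = 0 := by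
    by_contra h
    exact (Gq_ne_iff A B x).mp h hx
  -- p³ + A p q² + B q³ = 0 with q = den
  set p := x.num with hp
  set q : ℤ := (x.den : ℤ) with hq
  have hq0 : 0 < q := by rw [hq]; exact_mod_cast x.pos
  have hcub : p^3 + A*p*q^2 + B*q^3 = 0 := by
    have h4q : (4*q : ℤ) ≠ 0 := by positivity
    have := hGz
    rw [Gq] at this
    rcases mul_eq_zero.mp this with h' | h'
    · exact absurd h' (by positivity)
    · exact h'
  -- q divides p³, and is coprime to p, so q = 1
  have hcop : IsCoprime p q := by
    rw [Int.isCoprime_iff_gcd_eq_one, hp, hq]; simpa [Int.gcd] using x.reduced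
  have hqdvd : q ∣ p^3 := ⟨-(A*p*q) - B*q^2, by linarith [hcub]⟩
  have hq1 : q = 1 := by
    have : IsCoprime q (p^3) := (hcop.symm.pow_right)
    have hu : IsUnit q := isUnit_of_dvd_one (this.dvd_of_dvd_mul_right (by simpa using hqdvd.mul_right 1))
    rcases Int.isUnit_iff.mp hu with h | h
    · exact h
    · omega
  -- now p³ + A p + B = 0
  have hpeq : p^3 = -(A*p) - B := by rw [hq1] at hcub; linarith [hcub]
  have hP : |(p:ℝ)|^3 ≤ |(A:ℝ)| * |(p:ℝ)| + |(B:ℝ)| := by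
    have : |(p:ℝ)|^3 = |(p:ℝ)^3| := (abs_pow _ _).symm
    rw [this]
    have hcast : ((p:ℝ))^3 = -((A:ℝ)*(p:ℝ)) - (B:ℝ) := by exact_mod_cast hpeq
    rw [hcast]
    calc |(-((A:ℝ)*(p:ℝ)) - (B:ℝ))| ≤ |(A:ℝ)*(p:ℝ)| + |(B:ℝ)| := by
          rw [← abs_neg ((A:ℝ)*(p:ℝ))]; exact abs_sub _ _
    _ = |(A:ℝ)| * |(p:ℝ)| + |(B:ℝ)| := by rw [abs_mul]
  have hPb : |(p:ℝ)| ≤ 1 + |(A:ℝ)| + |(B:ℝ)| := by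
    nlinarith [abs_nonneg (p:ℝ), abs_nonneg (A:ℝ), abs_nonneg (B:ℝ), sq_nonneg (|(p:ℝ)| - 1)]
  have hden : ((x.den:ℝ)) = 1 := by
    have : (x.den : ℤ) = 1 := hq1
    exact_mod_cast this
  rw [HQr, hden]
  apply max_le hPb
  have := abs_nonneg (A:ℝ); have := abs_nonneg (B:ℝ); linarith

set_option maxHeartbeats 1600000 in
/-- Key one-step height estimate. -/
lemma exists_step_bounds (A B : ℤ) (hAB : 4*A^3 + 27*B^2 ≠ 0) :
    ∃ K : ℝ, 4 ≤ K ∧ ∀ x : ℚ, Gq A B x.num x.den ≠ 0 →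
      HQr x ^ 4 / K ≤ HQr (stepQ A B x) ∧ HQr (stepQ A B x) ≤ K * HQr x ^ 4 := by
  set α : ℝ := (A:ℝ) with hα
  set β : ℝ := (B:ℝ) with hβ
  set Dr : ℝ := 4*α^3 + 27*β^2 with hDr
  have hDr0 : Dr ≠ 0 := by
    rw [hDr, hα, hβ]
    intro h
    apply hAB
    have : ((4*A^3 + 27*B^2 : ℤ) : ℝ) = 0 := by push_cast; linarith [h]
    exact_mod_cast this
  have hDrpos : 0 < |Dr| := abs_pos.mpr hDr0
  set S1 : ℝ := |(1:ℝ)| + |(0:ℝ)| + |(-(2*α))| + |(-(8*β))| + |α^2| with hS1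
  set S2 : ℝ := |(0:ℝ)| + |(4:ℝ)| + |(0:ℝ)| + |4*α| + |4*β| with hS2
  set S3 : ℝ := (|(0:ℝ)| + |(12:ℝ)| + |(0:ℝ)| + |16*α|) + (|(3:ℝ)| + |(0:ℝ)| + |(-(5*α))| + |(-(27*β))|) with hS3
  set S4 : ℝ := (|4*Dr| + |(-(4*α^2*β))| + |12*α^4 + 88*α*β^2| + |12*α^3*β + 96*β^3|)
      + (|(-(α^2*β))| + |(-(5*α^4 + 32*α*β^2))| + |(-(26*α^3*β + 192*β^3))| + |3*α^5 + 24*α^2*β^2|) with hS4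
  have hS1n : 0 ≤ S1 := by rw [hS1]; positivity
  have hS2n : 0 ≤ S2 := by rw [hS2]; positivity
  have hS3n : 0 ≤ S3 := by rw [hS3]; positivity
  have hS4n : 0 ≤ S4 := by rw [hS4]; positivity
  refine ⟨4 + S1 + S2 + S3 + S4, by linarith, ?_⟩
  set K : ℝ := 4 + S1 + S2 + S3 + S4 with hK
  have hKpos : 0 < K := by rw [hK]; linarith
  intro x hG
  set p : ℤ := x.num with hp
  set q : ℤ := (x.den : ℤ) with hq
  have hq0 : 0 < q := by rw [hq]; exact_mod_cast x.pos
  set T : ℝ := HQr x with hT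
  have hT1 : 1 ≤ T := one_le_HQr x
  have hTpos : 0 < T := by linarith
  have hpT : |(p:ℝ)| ≤ T := by rw [hT, hp]; exact abs_num_le x
  have hqT : |(q:ℝ)| ≤ T := by
    rw [hT, hq, abs_of_nonneg (by positivity : (0:ℝ) ≤ (((x.den:ℤ)):ℝ))]
    push_cast
    exact den_le x
  set F : ℤ := Fq A B p q with hF
  set G : ℤ := Gq A B p q with hG'
  have hFbound : |(F:ℝ)| ≤ S1 * T^4 := by
    have h := quartic_bound 1 0 (-(2*α)) (-(8*β)) (α^2) (p:ℝ) (q:ℝ) T hpT hqT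
    have he : (1*(p:ℝ)^4 + 0*(p:ℝ)^3*(q:ℝ) + (-(2*α))*(p:ℝ)^2*(q:ℝ)^2 + (-(8*β))*(p:ℝ)*(q:ℝ)^3 + α^2*(q:ℝ)^4) = (F:ℝ) := by
      rw [hF, Fq, hα, hβ]; push_cast; ring
    rw [he] at h
    rw [hS1]; exact h
  have hGbound : |(G:ℝ)| ≤ S2 * T^4 := by
    have h := quartic_bound 0 4 0 (4*α) (4*β) (p:ℝ) (q:ℝ) T hpT hqT
    have he : (0*(p:ℝ)^4 + 4*(p:ℝ)^3*(q:ℝ) + 0*(p:ℝ)^2*(q:ℝ)^2 + (4*α)*(p:ℝ)*(q:ℝ)^3 + (4*β)*(q:ℝ)^4) = (G:ℝ) := by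
      rw [hG', Gq, hα, hβ]; push_cast; ring
    rw [he] at h
    rw [hS2]; exact h
  set maxFG : ℝ := max |(F:ℝ)| |(G:ℝ)| with hmaxFG
  have hmaxFGn : 0 ≤ maxFG := le_trans (abs_nonneg _) (le_max_left _ _)
  have hFm : |(F:ℝ)| ≤ maxFG := le_max_left _ _
  have hGm : |(G:ℝ)| ≤ maxFG := le_max_right _ _
  have hT3 : (0:ℝ) < T^3 := by positivity
  have hlow : 4 * |Dr| * T^7 ≤ K * T^3 * maxFG := by
    rcases max_cases |(x.num:ℝ)| ((x.den:ℝ)) with ⟨hmax, _⟩ | ⟨hmax, _⟩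
    · -- T = |p| ; use identity idp
      have hTp : T = |(p:ℝ)| := by rw [hT, hp]; unfold HQr; exact hmax
      set ca : ℝ := |4*Dr| + |(-(4*α^2*β))| + |12*α^4+88*α*β^2| + |12*α^3*β+96*β^3| with hca
      set cb : ℝ := |(-(α^2*β))| + |(-(5*α^4+32*α*β^2))| + |(-(26*α^3*β+192*β^3))| + |3*α^5+24*α^2*β^2| with hcb
      set aR : ℝ := 4*Dr*(p:ℝ)^3 + (-(4*α^2*β))*(p:ℝ)^2*(q:ℝ) + (12*α^4+88*α*β^2)*(p:ℝ)*(q:ℝ)^2 + (12*α^3*β+96*β^3)*(q:ℝ)^3 with haR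
      set bR : ℝ := (-(α^2*β))*(p:ℝ)^3 + (-(5*α^4+32*α*β^2))*(p:ℝ)^2*(q:ℝ) + (-(26*α^3*β+192*β^3))*(p:ℝ)*(q:ℝ)^2 + (3*α^5+24*α^2*β^2)*(q:ℝ)^3 with hbR
      have ha : |aR| ≤ ca * T^3 := by rw [haR, hca]; exact cubic_bound _ _ _ _ _ _ _ hpT hqT
      have hb : |bR| ≤ cb * T^3 := by rw [hbR, hcb]; exact cubic_bound _ _ _ _ _ _ _ hpT hqT
      have hid2 : aR * (F:ℝ) - bR * (G:ℝ) = 4*Dr*(p:ℝ)^7 := by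
        have hint := idp A B p q
        have hc : (((4*(4*A^3+27*B^2)*p^3 - 4*A^2*B*p^2*q + (12*A^4+88*A*B^2)*p*q^2 + (12*A^3*B+96*B^3)*q^3)
            * Fq A B p q - (-(A^2*B)*p^3 - (5*A^4+32*A*B^2)*p^2*q - (26*A^3*B+192*B^3)*p*q^2
            + (3*A^5+24*A^2*B^2)*q^3) * Gq A B p q : ℤ) : ℝ) = ((4*(4*A^3+27*B^2) * p^7 : ℤ) : ℝ) :=
          congrArg (Int.cast : ℤ → ℝ) hint
        push_cast at hc
        rw [haR, hbR, hF, hG']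
        simp only [hDr, hα, hβ]
        linear_combination hc
      have h47 : 4 * |Dr| * T^7 = |4*Dr*(p:ℝ)^7| := by
        rw [abs_mul, abs_mul, abs_pow, ← hTp, abs_of_nonneg (by norm_num : (0:ℝ) ≤ 4)]
      have htri : |4*Dr*(p:ℝ)^7| ≤ |aR| * |(F:ℝ)| + |bR| * |(G:ℝ)| := by
        rw [← hid2]
        calc |aR * (F:ℝ) - bR * (G:ℝ)| ≤ |aR * (F:ℝ)| + |bR * (G:ℝ)| := abs_sub _ _
        _ = |aR| * |(F:ℝ)| + |bR| * |(G:ℝ)| := by rw [abs_mul, abs_mul]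
      have hsum : |aR| * |(F:ℝ)| + |bR| * |(G:ℝ)| ≤ (ca + cb) * T^3 * maxFG := by
        have h1 : |aR| * |(F:ℝ)| ≤ ca * T^3 * maxFG :=
          mul_le_mul ha hFm (abs_nonneg _) (by positivity)
        have h2 : |bR| * |(G:ℝ)| ≤ cb * T^3 * maxFG :=
          mul_le_mul hb hGm (abs_nonneg _) (by positivity)
        rw [add_mul, add_mul]; linarith
      have hcan : 0 ≤ ca := by rw [hca]; positivity
      have hcbn : 0 ≤ cb := by rw [hcb]; positivity
      have hcaK : ca + cb ≤ K := by rw [hK, hS4, hca, hcb]; linarith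
      calc 4 * |Dr| * T^7 = |4*Dr*(p:ℝ)^7| := h47
      _ ≤ |aR| * |(F:ℝ)| + |bR| * |(G:ℝ)| := htri
      _ ≤ (ca + cb) * T^3 * maxFG := hsum
      _ ≤ K * T^3 * maxFG := by
          apply mul_le_mul_of_nonneg_right _ hmaxFGn
          exact mul_le_mul_of_nonneg_right hcaK (le_of_lt hT3)
    · -- T = q ; use identity idq
      have hTq : T = |(q:ℝ)| := by
        rw [hT, hq]
        unfold HQr
        rw [hmax]
        rw [abs_of_nonneg (by positivity : (0:ℝ) ≤ (((x.den:ℤ)):ℝ))]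
        push_cast
        ring
      set ca : ℝ := |(0:ℝ)| + |(12:ℝ)| + |(0:ℝ)| + |16*α| with hca
      set cb : ℝ := |(3:ℝ)| + |(0:ℝ)| + |(-(5*α))| + |(-(27*β))| with hcb
      set aR : ℝ := 0*(p:ℝ)^3 + 12*(p:ℝ)^2*(q:ℝ) + 0*(p:ℝ)*(q:ℝ)^2 + (16*α)*(q:ℝ)^3 with haR
      set bR : ℝ := 3*(p:ℝ)^3 + 0*(p:ℝ)^2*(q:ℝ) + (-(5*α))*(p:ℝ)*(q:ℝ)^2 + (-(27*β))*(q:ℝ)^3 with hbR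
      have ha : |aR| ≤ ca * T^3 := by rw [haR, hca]; exact cubic_bound _ _ _ _ _ _ _ hpT hqT
      have hb : |bR| ≤ cb * T^3 := by rw [hbR, hcb]; exact cubic_bound _ _ _ _ _ _ _ hpT hqT
      have hid2 : aR * (F:ℝ) - bR * (G:ℝ) = 4*Dr*(q:ℝ)^7 := by
        have hint := idq A B p q
        have hc : (((12*p^2*q + 16*A*q^3) * Fq A B p q - (3*p^3 - 5*A*p*q^2 - 27*B*q^3) * Gq A B p q : ℤ) : ℝ)
            = ((4*(4*A^3 + 27*B^2) * q^7 : ℤ) : ℝ) := congrArg (Int.cast : ℤ → ℝ) hint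
        push_cast at hc
        rw [haR, hbR, hF, hG']
        simp only [hDr, hα, hβ]
        linear_combination hc
      have h47 : 4 * |Dr| * T^7 = |4*Dr*(q:ℝ)^7| := by
        rw [abs_mul, abs_mul, abs_pow, ← hTq, abs_of_nonneg (by norm_num : (0:ℝ) ≤ 4)]
      have htri : |4*Dr*(q:ℝ)^7| ≤ |aR| * |(F:ℝ)| + |bR| * |(G:ℝ)| := by
        rw [← hid2]
        calc |aR * (F:ℝ) - bR * (G:ℝ)| ≤ |aR * (F:ℝ)| + |bR * (G:ℝ)| := abs_sub _ _
        _ = |aR| * |(F:ℝ)| + |bR| * |(G:ℝ)| := by rw [abs_mul, abs_mul]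
      have hsum : |aR| * |(F:ℝ)| + |bR| * |(G:ℝ)| ≤ (ca + cb) * T^3 * maxFG := by
        have h1 : |aR| * |(F:ℝ)| ≤ ca * T^3 * maxFG :=
          mul_le_mul ha hFm (abs_nonneg _) (by positivity)
        have h2 : |bR| * |(G:ℝ)| ≤ cb * T^3 * maxFG :=
          mul_le_mul hb hGm (abs_nonneg _) (by positivity)
        rw [add_mul, add_mul]; linarith
      have hcan : 0 ≤ ca := by rw [hca]; positivity
      have hcbn : 0 ≤ cb := by rw [hcb]; positivity
      have hcaK : ca + cb ≤ K := by rw [hK, hS3, hca, hcb]; linarith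
      calc 4 * |Dr| * T^7 = |4*Dr*(q:ℝ)^7| := h47
      _ ≤ |aR| * |(F:ℝ)| + |bR| * |(G:ℝ)| := htri
      _ ≤ (ca + cb) * T^3 * maxFG := hsum
      _ ≤ K * T^3 * maxFG := by
          apply mul_le_mul_of_nonneg_right _ hmaxFGn
          exact mul_le_mul_of_nonneg_right hcaK (le_of_lt hT3)
  have hmaxlow : 4 * |Dr| * T^4 / K ≤ maxFG := by
    have h' : (4 * |Dr| * T^4) * T^3 ≤ (K * maxFG) * T^3 := by
      calc (4 * |Dr| * T^4) * T^3 = 4 * |Dr| * T^7 := by ring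
      _ ≤ K * T^3 * maxFG := hlow
      _ = (K * maxFG) * T^3 := by ring
    have h'' := le_of_mul_le_mul_right h' hT3
    rw [div_le_iff₀ hKpos]
    linarith
  obtain ⟨k, hk0, hkF, hkG⟩ := rat_div_struct F G hG
  set N : ℤ := ((F:ℚ)/(G:ℚ)).num with hN
  set Dd : ℤ := (((F:ℚ)/(G:ℚ)).den : ℤ) with hDd
  have hstep : stepQ A B x = (F:ℚ)/(G:ℚ) := by rw [stepQ, ← hp, ← hq, ← hF, ← hG']
  have hkdvd : k ∣ 4*(4*A^3+27*B^2) := by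
    have hkFd : k ∣ F := ⟨N, by rw [hkF]; ring⟩
    have hkGd : k ∣ G := ⟨Dd, by rw [hkG]; ring⟩
    have h1 : k ∣ 4*(4*A^3+27*B^2)*q^7 := by
      rw [← idq A B p q, ← hF, ← hG']
      exact dvd_sub (hkFd.mul_left _) (hkGd.mul_left _)
    have h2 : k ∣ 4*(4*A^3+27*B^2)*p^7 := by
      rw [← idp A B p q, ← hF, ← hG']
      exact dvd_sub (hkFd.mul_left _) (hkGd.mul_left _)
    have hcop : IsCoprime p q := by
      rw [Int.isCoprime_iff_gcd_eq_one, hp, hq]; simpa [Int.gcd] using x.reduced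
    have hcop7 : IsCoprime (p^7) (q^7) := hcop.pow
    obtain ⟨s, t, hst⟩ := hcop7
    have hcomb : 4*(4*A^3+27*B^2) = s * (4*(4*A^3+27*B^2)*p^7) + t * (4*(4*A^3+27*B^2)*q^7) := by
      linear_combination (4*(4*A^3+27*B^2)) * hst.symm
    rw [hcomb]
    exact dvd_add (h2.mul_left s) (h1.mul_left t)
  have h4D0 : (4*(4*A^3+27*B^2) : ℤ) ≠ 0 := mul_ne_zero (by norm_num) hAB
  have hkabs : |(k:ℝ)| ≤ 4 * |Dr| := by
    have hd1 : k ∣ |4*(4*A^3+27*B^2)| := (dvd_abs _ _).mpr hkdvd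
    have hd2 : |k| ∣ |4*(4*A^3+27*B^2)| := (abs_dvd _ _).mpr hd1
    have h1 : |k| ≤ |4*(4*A^3+27*B^2)| := Int.le_of_dvd (abs_pos.mpr h4D0) hd2
    have h2 : ((|k| : ℤ) : ℝ) ≤ ((|4*(4*A^3+27*B^2)| : ℤ) : ℝ) := by exact_mod_cast h1
    rw [Int.cast_abs, Int.cast_abs] at h2
    calc |(k:ℝ)| ≤ |((4*(4*A^3+27*B^2) : ℤ) : ℝ)| := h2
    _ = 4 * |Dr| := by
        push_cast
        simp only [hDr, hα, hβ]
        rw [show ((4:ℝ) * (4*(A:ℝ)^3 + 27*(B:ℝ)^2)) = 4*(4*(A:ℝ)^3+27*(B:ℝ)^2) from rfl,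
          abs_mul, abs_of_nonneg (by norm_num : (0:ℝ) ≤ 4)]
  have hk1 : 1 ≤ |(k:ℝ)| := by
    have h := Int.one_le_abs hk0
    have : ((1:ℤ):ℝ) ≤ ((|k|:ℤ):ℝ) := by exact_mod_cast h
    rw [Int.cast_abs] at this
    simpa using this
  have hNF : |(N:ℝ)| * |(k:ℝ)| = |(F:ℝ)| := by
    rw [← abs_mul]; congr 1; exact_mod_cast hkF.symm
  have hDG : |(Dd:ℝ)| * |(k:ℝ)| = |(G:ℝ)| := by
    rw [← abs_mul]; congr 1; exact_mod_cast hkG.symm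
  have hHstep : HQr (stepQ A B x) = max |(N:ℝ)| |(Dd:ℝ)| := by
    rw [hstep]
    unfold HQr
    rw [hN, hDd]
    congr 1
    rw [Int.cast_natCast]
    exact (abs_of_nonneg (by positivity)).symm
  have hDdnn : (0:ℝ) ≤ |(Dd:ℝ)| := abs_nonneg _
  constructor
  · rw [hHstep]
    have h1 : maxFG ≤ max |(N:ℝ)| |(Dd:ℝ)| * (4 * |Dr|) := by
      rw [hmaxFG]
      apply max_le
      · rw [← hNF]
        exact mul_le_mul (le_max_left _ _) hkabs (abs_nonneg _) (le_trans hDdnn (le_max_right _ _))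
      · rw [← hDG]
        exact mul_le_mul (le_max_right _ _) hkabs (abs_nonneg _) (le_trans hDdnn (le_max_right _ _))
    have h2 : 4 * |Dr| * T^4 / K ≤ max |(N:ℝ)| |(Dd:ℝ)| * (4 * |Dr|) := le_trans hmaxlow h1
    rw [div_le_iff₀ hKpos] at h2 ⊢
    nlinarith [h2, hDrpos]
  · rw [hHstep]
    apply max_le
    · calc |(N:ℝ)| ≤ |(N:ℝ)| * |(k:ℝ)| := le_mul_of_one_le_right (abs_nonneg _) hk1
      _ = |(F:ℝ)| := hNF
      _ ≤ S1 * T^4 := hFbound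
      _ ≤ K * T^4 := by
          apply mul_le_mul_of_nonneg_right _ (by positivity)
          rw [hK]; linarith
    · calc |(Dd:ℝ)| ≤ |(Dd:ℝ)| * |(k:ℝ)| := le_mul_of_one_le_right (abs_nonneg _) hk1
      _ = |(G:ℝ)| := hDG
      _ ≤ S2 * T^4 := hGbound
      _ ≤ K * T^4 := by
          apply mul_le_mul_of_nonneg_right _ (by positivity)
          rw [hK]; linarith

/-- numerator/denominator of `a/b` are bounded by `a`, `b`. -/
lemma HQr_div_le (a b : ℤ) (hb : b ≠ 0) :
    HQr ((a:ℚ)/(b:ℚ)) ≤ max |(a:ℝ)| |(b:ℝ)| := by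
  obtain ⟨k, hk0, hkN, hkD⟩ := rat_div_struct a b hb
  have hk1 : (1:ℝ) ≤ |(k:ℝ)| := by
    have h := Int.one_le_abs hk0
    have : ((1:ℤ):ℝ) ≤ ((|k|:ℤ):ℝ) := by exact_mod_cast h
    rw [Int.cast_abs] at this; simpa using this
  set y : ℚ := (a:ℚ)/(b:ℚ) with hy
  apply max_le
  · calc |(y.num:ℝ)| ≤ |(y.num:ℝ)| * |(k:ℝ)| := le_mul_of_one_le_right (abs_nonneg _) hk1
    _ = |(a:ℝ)| := by rw [← abs_mul]; congr 1; exact_mod_cast hkN.symm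
    _ ≤ max |(a:ℝ)| |(b:ℝ)| := le_max_left _ _
  · calc ((y.den:ℕ):ℝ) ≤ ((y.den:ℕ):ℝ) * |(k:ℝ)| := le_mul_of_one_le_right (by positivity) hk1
    _ = |(((y.den:ℤ) * k : ℤ):ℝ)| := by
        push_cast
        rw [abs_mul, abs_of_nonneg (by positivity : (0:ℝ) ≤ ((y.den:ℕ):ℝ))]
    _ = |(b:ℝ)| := by rw [← hkD]
    _ ≤ max |(a:ℝ)| |(b:ℝ)| := le_max_right _ _

lemma HQr_intmul_le (r : ℤ) (hr : r ≠ 0) (x : ℚ) :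
    HQr ((r:ℚ)*x) ≤ |(r:ℝ)| * HQr x := by
  have hr1 : (1:ℝ) ≤ |(r:ℝ)| := by
    have h := Int.one_le_abs hr
    have : ((1:ℤ):ℝ) ≤ ((|r|:ℤ):ℝ) := by exact_mod_cast h
    rw [Int.cast_abs] at this; simpa using this
  have hden : ((x.den:ℤ):ℚ) ≠ 0 := by exact_mod_cast x.den_nz
  have hrw : (r:ℚ)*x = ((r*x.num : ℤ):ℚ)/(((x.den:ℤ)):ℚ) := by
    push_cast
    field_simp
    rw [num_eq_mul_den x]
  rw [hrw]
  calc HQr _ ≤ max |((r*x.num:ℤ):ℝ)| |(((x.den:ℤ)):ℝ)| := HQr_div_le _ _ (by exact_mod_cast x.den_nz)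
  _ ≤ |(r:ℝ)| * HQr x := by
      apply max_le
      · push_cast
        rw [abs_mul]
        exact mul_le_mul_of_nonneg_left (abs_num_le x) (abs_nonneg _)
      · push_cast
        rw [abs_of_nonneg (by positivity : (0:ℝ) ≤ ((x.den:ℕ):ℝ))]
        calc ((x.den:ℕ):ℝ) ≤ HQr x := den_le x
        _ ≤ |(r:ℝ)| * HQr x := le_mul_of_one_le_left (le_of_lt (HQr_pos x)) hr1

lemma HQr_le_intmul (r : ℤ) (hr : r ≠ 0) (x : ℚ) :
    HQr x ≤ |(r:ℝ)| * HQr ((r:ℚ)*x) := by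
  have hr1 : (1:ℝ) ≤ |(r:ℝ)| := by
    have h := Int.one_le_abs hr
    have : ((1:ℤ):ℝ) ≤ ((|r|:ℤ):ℝ) := by exact_mod_cast h
    rw [Int.cast_abs] at this; simpa using this
  set y : ℚ := (r:ℚ)*x with hy
  have hrQ : (r:ℚ) ≠ 0 := by exact_mod_cast hr
  have hdenQ : ((y.den:ℤ):ℚ) ≠ 0 := by exact_mod_cast y.den_nz
  have hrw : x = ((y.num : ℤ):ℚ)/(((r*(y.den:ℤ)):ℤ):ℚ) := by
    push_cast
    field_simp
    rw [num_eq_mul_den y, hy]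
    ring
  rw [hrw]
  calc HQr _ ≤ max |((y.num:ℤ):ℝ)| |(((r*(y.den:ℤ)):ℤ):ℝ)| :=
        HQr_div_le _ _ (mul_ne_zero hr (by exact_mod_cast y.den_nz))
  _ ≤ |(r:ℝ)| * HQr y := by
      apply max_le
      · calc |((y.num:ℤ):ℝ)| ≤ HQr y := abs_num_le y
        _ ≤ |(r:ℝ)| * HQr y := le_mul_of_one_le_left (le_of_lt (HQr_pos y)) hr1
      · push_cast
        rw [abs_mul]
        apply mul_le_mul_of_nonneg_left _ (abs_nonneg _)
        rw [abs_of_nonneg (by positivity : (0:ℝ) ≤ ((y.den:ℕ):ℝ))]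
        exact den_le y

lemma log_shift (r : ℤ) (hr : r ≠ 0) (x : ℚ) :
    |Real.log (HQr ((r:ℚ)*x)) - Real.log (HQr x)| ≤ Real.log |(r:ℝ)| := by
  have hrpos : (0:ℝ) < |(r:ℝ)| := by
    apply abs_pos.mpr; exact_mod_cast hr
  have h1 : Real.log (HQr ((r:ℚ)*x)) ≤ Real.log |(r:ℝ)| + Real.log (HQr x) := by
    rw [← Real.log_mul (ne_of_gt hrpos) (ne_of_gt (HQr_pos x))]
    exact Real.log_le_log (HQr_pos _) (HQr_intmul_le r hr x)
  have h2 : Real.log (HQr x) ≤ Real.log |(r:ℝ)| + Real.log (HQr ((r:ℚ)*x)) := by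
    rw [← Real.log_mul (ne_of_gt hrpos) (ne_of_gt (HQr_pos _))]
    exact Real.log_le_log (HQr_pos _) (HQr_le_intmul r hr x)
  rw [abs_le]
  constructor <;> linarith

/-- Orbit height invariants for the iterated duplication map. -/
lemma orbit_bounds (A B : ℤ) (K : ℝ) (hK4 : 4 ≤ K)
    (hstep : ∀ x : ℚ, Gq A B x.num x.den ≠ 0 →
      HQr x ^ 4 / K ≤ HQr (stepQ A B x) ∧ HQr (stepQ A B x) ≤ K * HQr x ^ 4)
    (x0 : ℚ) (hx0 : Real.log K + Real.log (1 + |(A:ℝ)| + |(B:ℝ)|) < Real.log (HQr x0)) :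
    ∀ n : ℕ,
      (4^n * (Real.log (HQr x0) - Real.log K / 3) + Real.log K / 3
          ≤ Real.log (HQr ((stepQ A B)^[n] x0))
        ∧ Real.log (HQr ((stepQ A B)^[n] x0))
          ≤ 4^n * (Real.log (HQr x0) + Real.log K / 3) - Real.log K / 3)
      ∧ ((stepQ A B)^[n] x0)^3 + A * ((stepQ A B)^[n] x0) + B ≠ 0 := by
  set R : ℝ := 1 + |(A:ℝ)| + |(B:ℝ)| with hR
  set L : ℝ := Real.log K with hL
  set h0 : ℝ := Real.log (HQr x0) with hh0
  have hL0 : 0 ≤ L := by rw [hL]; exact Real.log_nonneg (by linarith)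
  have hR1 : (1:ℝ) ≤ R := by rw [hR]; have := abs_nonneg (A:ℝ); have := abs_nonneg (B:ℝ); linarith
  have hlogR0 : 0 ≤ Real.log R := Real.log_nonneg hR1
  have hh0big : L + Real.log R < h0 := by rw [hh0, hL]; linarith [hx0]
  -- a point with log-height > log R is not a root of the cubic
  have hroot : ∀ x : ℚ, Real.log R < Real.log (HQr x) → x^3 + A*x + B ≠ 0 := by
    intro x hx hzero
    have := root_bound A B x hzero
    have : Real.log (HQr x) ≤ Real.log R := Real.log_le_log (HQr_pos x) (by rw [hR]; exact this)
    linarith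
  intro n
  induction n with
  | zero =>
      refine ⟨⟨by norm_num [hh0], by norm_num [hh0]⟩, ?_⟩
      exact hroot x0 (by rw [← hh0]; linarith)
  | succ n ih =>
      obtain ⟨⟨hlo, hhi⟩, hcub⟩ := ih
      set ξ : ℚ := (stepQ A B)^[n] x0 with hξ
      have h4n : (1:ℝ) ≤ 4^n := one_le_pow₀ (by norm_num)
      have hGne : Gq A B ξ.num ξ.den ≠ 0 := (Gq_ne_iff A B ξ).mpr hcub
      obtain ⟨hstep1, hstep2⟩ := hstep ξ hGne
      have hKpos : (0:ℝ) < K := by linarith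
      have hnext : (stepQ A B)^[n+1] x0 = stepQ A B ξ := Function.iterate_succ_apply' _ _ _
      have hlog1 : 4 * Real.log (HQr ξ) - L ≤ Real.log (HQr (stepQ A B ξ)) := by
        have := Real.log_le_log (div_pos (pow_pos (HQr_pos ξ) 4) hKpos) hstep1
        rw [Real.log_div (ne_of_gt (pow_pos (HQr_pos ξ) 4)) (ne_of_gt hKpos), Real.log_pow] at this
        push_cast at this
        rw [hL]
        linarith
      have hlog2 : Real.log (HQr (stepQ A B ξ)) ≤ 4 * Real.log (HQr ξ) + L := by
        have := Real.log_le_log (HQr_pos _) hstep2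
        rw [Real.log_mul (ne_of_gt hKpos) (ne_of_gt (pow_pos (HQr_pos ξ) 4)), Real.log_pow] at this
        push_cast at this
        rw [hL]
        linarith
      have hlo' : 4^(n+1) * (h0 - L/3) + L/3 ≤ Real.log (HQr ((stepQ A B)^[n+1] x0)) := by
        rw [hnext]
        have : (4:ℝ)^(n+1) = 4 * 4^n := by ring
        rw [this]
        linarith
      refine ⟨⟨hlo', ?_⟩, ?_⟩
      · rw [hnext]
        have : (4:ℝ)^(n+1) = 4 * 4^n := by ring
        rw [this]
        linarith
      · apply hroot
        have h41 : (1:ℝ) ≤ 4^(n+1) := one_le_pow₀ (by norm_num)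
        have hh0L : 0 ≤ h0 - L/3 := by linarith
        nlinarith [hlo', hh0L, h41]


/-- The binary quartic form `Q(u,v) = u(v³ + Au²v + Bu³)`. -/
def QF (A B u v : ℤ) : ℤ := u * (v ^ 3 + A * u ^ 2 * v + B * u ^ 3)

/-- An integral Weierstrass model of the quadratic twist `E_d : dy² = x³ + Ax + B`,
namely `Y² = X³ + Ad²X + Bd³`, obtained via `(x, y) ↦ (dx, d²y)`. -/
def Ed (A B d : ℤ) : WeierstrassCurve.Affine ℚ :=
  { a₁ := 0, a₂ := 0, a₃ := 0, a₄ := (A : ℚ) * d ^ 2, a₆ := (B : ℚ) * d ^ 3 }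

/-- The Weil height of a rational number `x = a/b` in lowest terms: `log max {|a|, |b|}`. -/
noncomputable def hxQ (x : ℚ) : ℝ := Real.log (max |(x.num : ℝ)| (x.den : ℝ))

/-- The Weil height `h_x` of a rational point on a Weierstrass curve: the height of the
image of the point under `x : E → ℙ¹` (and `0` at the point at infinity). -/
noncomputable def hxPoint {W : WeierstrassCurve.Affine ℚ} : W.Point → ℝ
  | .zero => 0
  | .some x _ _ => hxQ x

/-- The canonical height `ĥ(P) = (1/2)·lim_{n → ∞} 4⁻ⁿ h_x(2ⁿ P)`. -/
noncomputable def canHeight {W : WeierstrassCurve.Affine ℚ} (P : W.Point) : ℝ :=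
  (limUnder atTop fun n : ℕ => hxPoint ((2 ^ n : ℕ) • P) / 4 ^ n) / 2

/-- The set `𝓗(Y)` of squarefree `d` with `η_d(A,B) ≤ Y`, i.e. such that `E_d` has a
non-torsion rational point of canonical height at most `log Y`. -/
noncomputable def HSet (A B : ℤ) (Y : ℝ) : Set ℤ :=
  {d | Squarefree d ∧
    ∃ P : (Ed A B d).Point, ¬ IsOfFinAddOrder P ∧ canHeight P ≤ Real.log Y}

/-- The Mordell–Weil rank of `E_d(ℚ)`. -/
noncomputable def mwRank (A B d : ℤ) : ℕ := Module.finrank ℤ (Ed A B d).Point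

/-- `r_Q(d; Z) = #{(u,v) ∈ ℤ² : |u|, |v| ≤ Z, Q(u,v) = d}`. -/
noncomputable def rQ (A B d : ℤ) (Z : ℝ) : ℕ :=
  Nat.card {p : ℤ × ℤ // (|p.1| : ℝ) ≤ Z ∧ (|p.2| : ℝ) ≤ Z ∧ QF A B p.1 p.2 = d}

lemma hxQ_eq (x : ℚ) : hxQ x = Real.log (HQr x) := rfl

lemma hxPoint_some {W : WeierstrassCurve.Affine ℚ} {x y : ℚ} (h : W.Nonsingular x y) :
    hxPoint (WeierstrassCurve.Affine.Point.some _ _ h) = hxQ x := rfl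

lemma Ed_negY (A B d : ℤ) (X Y : ℚ) : (Ed A B d).negY X Y = -Y := by
  simp [Ed, WeierstrassCurve.Affine.negY]

lemma Ed_equation_iff (A B d : ℤ) (X Y : ℚ) :
    (Ed A B d).Equation X Y ↔ Y^2 = X^3 + (A:ℚ)*(d:ℚ)^2*X + (B:ℚ)*(d:ℚ)^3 := by
  rw [WeierstrassCurve.Affine.equation_iff]
  simp [Ed]

lemma Ed_double (A B d : ℤ) (hd : (d:ℚ) ≠ 0) (ξ Y : ℚ) (hf : ξ^3 + (A:ℚ)*ξ + B ≠ 0) (hY : Y ≠ 0)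
    (heq : Y^2 = ((d:ℚ)*ξ)^3 + (A:ℚ)*(d:ℚ)^2*((d:ℚ)*ξ) + (B:ℚ)*(d:ℚ)^3) :
    (Ed A B d).addX ((d:ℚ)*ξ) ((d:ℚ)*ξ)
      ((Ed A B d).slope ((d:ℚ)*ξ) ((d:ℚ)*ξ) Y Y) = (d:ℚ) * stepQ A B ξ := by
  have hYne : Y ≠ (Ed A B d).negY ((d:ℚ)*ξ) Y := by
    rw [Ed_negY]; intro hc; apply hY; linarith
  have hg : ((d:ℚ)*ξ)^3 + (A:ℚ)*(d:ℚ)^2*((d:ℚ)*ξ) + (B:ℚ)*(d:ℚ)^3 ≠ 0 := by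
    have hgr : ((d:ℚ)*ξ)^3 + (A:ℚ)*(d:ℚ)^2*((d:ℚ)*ξ) + (B:ℚ)*(d:ℚ)^3
        = (d:ℚ)^3*(ξ^3+(A:ℚ)*ξ+(B:ℚ)) := by ring
    rw [hgr]
    exact mul_ne_zero (pow_ne_zero _ hd) hf
  rw [WeierstrassCurve.Affine.slope_of_Y_ne rfl hYne, stepQ_eq A B ξ hf, Ed_negY]
  simp only [Ed, WeierstrassCurve.Affine.addX]
  have h2Y : Y - -Y = 2*Y := by ring
  rw [h2Y, div_pow]
  have h4Y : (2*Y)^2 = 4*Y^2 := by ring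
  rw [h4Y, heq]
  simp only [mul_zero, zero_mul, sub_zero, add_zero]
  rw [show ((d:ℚ)*ξ)^3 + (A:ℚ)*(d:ℚ)^2*((d:ℚ)*ξ) + (B:ℚ)*(d:ℚ)^3 = (d:ℚ)^3*(ξ^3+(A:ℚ)*ξ+(B:ℚ)) by ring]
  rw [div_sub' (by positivity), div_sub' (by positivity), mul_div_assoc', div_eq_div_iff (by positivity) (by positivity)]
  ring

/-- One-step log-height bound. -/
lemma step_log (A B : ℤ) (K : ℝ) (hK4 : 4 ≤ K)
    (hstep : ∀ x : ℚ, Gq A B x.num x.den ≠ 0 →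
      HQr x ^ 4 / K ≤ HQr (stepQ A B x) ∧ HQr (stepQ A B x) ≤ K * HQr x ^ 4)
    (x : ℚ) (hGne : Gq A B x.num x.den ≠ 0) :
    |Real.log (HQr (stepQ A B x)) - 4 * Real.log (HQr x)| ≤ Real.log K := by
  obtain ⟨h1, h2⟩ := hstep x hGne
  have hKpos : (0:ℝ) < K := by linarith
  have hlog1 : 4 * Real.log (HQr x) - Real.log K ≤ Real.log (HQr (stepQ A B x)) := by
    have := Real.log_le_log (div_pos (pow_pos (HQr_pos x) 4) hKpos) h1
    rw [Real.log_div (ne_of_gt (pow_pos (HQr_pos x) 4)) (ne_of_gt hKpos), Real.log_pow] at this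
    push_cast at this
    linarith
  have hlog2 : Real.log (HQr (stepQ A B x)) ≤ 4 * Real.log (HQr x) + Real.log K := by
    have := Real.log_le_log (HQr_pos _) h2
    rw [Real.log_mul (ne_of_gt hKpos) (ne_of_gt (pow_pos (HQr_pos x) 4)), Real.log_pow] at this
    push_cast at this
    linarith
  rw [abs_le]
  constructor <;> linarith


set_option maxHeartbeats 1600000 in
/-- There are constants `c, C > 0` depending only on `A` and `B` such that for every
`(u,v) ∈ ℤ²` with `Q(u,v)` squarefree and `max {|u|, |v|} > c`, the rational point
`(uv : 1 : u²)` on `E_{Q(u,v)} : dy² = x³ + Ax + B` (which, in the integral model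
`Y² = X³ + Ad²X + Bd³` of `E_d` with `d = Q(u,v)`, has coordinates
`(X, Y) = (dv/u, d²/u²)`) is non-torsion, and its canonical height is at most
`log (C·max {|u|, |v|}^{1/2})`; in particular `η_{Q(u,v)}(A,B) ≤ C·max {|u|^{1/2}, |v|^{1/2}}`. -/
theorem eta_of_twist_le (A B : ℤ) (hAB : 4 * A ^ 3 + 27 * B ^ 2 ≠ 0) :
    ∃ c C : ℝ, 0 < c ∧ 0 < C ∧
      ∀ u v : ℤ, Squarefree (QF A B u v) → c < max (|u| : ℝ) (|v| : ℝ) →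
        ∀ h : (Ed A B (QF A B u v)).Nonsingular
            ((QF A B u v : ℚ) * v / u) ((QF A B u v : ℚ) ^ 2 / u ^ 2),
          ¬ IsOfFinAddOrder (WeierstrassCurve.Affine.Point.some _ _ h) ∧
          canHeight (WeierstrassCurve.Affine.Point.some _ _ h) ≤
            Real.log (C * Real.sqrt (max (|u| : ℝ) (|v| : ℝ))) := by
  obtain ⟨K, hK4, hstepb⟩ := exists_step_bounds A B hAB
  have hKpos : (0:ℝ) < K := by linarith
  have hAn := abs_nonneg (A:ℝ)
  have hBn := abs_nonneg (B:ℝ)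
  have hR1 : (1:ℝ) ≤ 1 + |(A:ℝ)| + |(B:ℝ)| := by linarith
  have hRpos : (0:ℝ) < 1 + |(A:ℝ)| + |(B:ℝ)| := by linarith
  have hL0 : (0:ℝ) ≤ Real.log K := Real.log_nonneg (by linarith)
  have hlogR0 : (0:ℝ) ≤ Real.log (1 + |(A:ℝ)| + |(B:ℝ)|) := Real.log_nonneg hR1
  refine ⟨K * (1 + |(A:ℝ)| + |(B:ℝ)|), K, mul_pos hKpos hRpos, hKpos, ?_⟩
  intro u v hsf hM h
  set d : ℤ := QF A B u v with hd
  set M : ℝ := max |(u:ℝ)| |(v:ℝ)| with hMdef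
  have hd0 : d ≠ 0 := by
    intro h0
    rw [h0] at hsf
    exact not_squarefree_zero hsf
  have hu0 : u ≠ 0 := by
    intro h0
    apply hd0
    rw [hd, QF, h0]
    ring
  have hdue : d = u * (v^3 + A*u^2*v + B*u^3) := by rw [hd, QF]
  have hdQ : (d:ℚ) ≠ 0 := Int.cast_ne_zero.mpr hd0
  have huQ : (u:ℚ) ≠ 0 := Int.cast_ne_zero.mpr hu0
  -- u and v are coprime
  have hcopuv : Int.gcd u v = 1 := by
    set g : ℤ := (Int.gcd u v : ℤ) with hg
    have h1 : g ∣ u := Int.gcd_dvd_left u v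
    have h2 : g ∣ v := Int.gcd_dvd_right u v
    have h3 : g ∣ v^3 + A*u^2*v + B*u^3 := by
      refine dvd_add (dvd_add ?_ ?_) ?_
      · exact dvd_pow h2 (by norm_num)
      · exact Dvd.dvd.mul_left h2 _
      · exact Dvd.dvd.mul_left (dvd_pow h1 (by norm_num)) _
    have hgg : g * g ∣ d := by
      rw [hdue]
      exact mul_dvd_mul h1 h3
    have hunit := hsf g hgg
    rcases Int.isUnit_iff.mp hunit with h' | h'
    · rw [hg] at h'
      exact_mod_cast h'
    · exfalso
      have := Int.natCast_nonneg (Int.gcd u v)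
      rw [hg] at h'
      omega
  -- initial height
  set x0 : ℚ := (v:ℚ)/(u:ℚ) with hx0
  have hHx0 : HQr x0 = M := by
    obtain ⟨k, hk0, hkN, hkD⟩ := rat_div_struct v u hu0
    rw [← hx0] at hkN hkD
    have hkv : k ∣ v := ⟨x0.num, by rw [hkN]; ring⟩
    have hku : k ∣ u := ⟨(x0.den : ℤ), by rw [hkD]; ring⟩
    have hk1 : k ∣ (1:ℤ) := by
      have := Int.dvd_coe_gcd hku hkv
      rw [hcopuv] at this; exact_mod_cast this
      -- note : Int.gcd u v cast
    have hkabs : |(k:ℝ)| = 1 := by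
      rcases Int.isUnit_iff.mp (isUnit_of_dvd_one hk1) with h' | h' <;> rw [h'] <;> norm_num
    have hnum : |(x0.num:ℝ)| = |(v:ℝ)| := by
      have : (v:ℝ) = (x0.num:ℝ) * (k:ℝ) := by exact_mod_cast hkN
      rw [this, abs_mul, hkabs, mul_one]
    have hden : ((x0.den:ℕ):ℝ) = |(u:ℝ)| := by
      have : (u:ℝ) = ((x0.den:ℕ):ℝ) * (k:ℝ) := by exact_mod_cast hkD
      rw [this, abs_mul, hkabs, mul_one, abs_of_nonneg (by positivity : (0:ℝ) ≤ ((x0.den:ℕ):ℝ))]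
    rw [HQr, hnum, hden, hMdef, max_comm]
  have hKR : (0:ℝ) < K * (1 + |(A:ℝ)| + |(B:ℝ)|) := mul_pos hKpos hRpos
  have hMpos : (0:ℝ) < M := lt_trans hKR hM
  have hx0big : Real.log K + Real.log (1 + |(A:ℝ)| + |(B:ℝ)|) < Real.log (HQr x0) := by
    rw [hHx0]
    have := Real.log_lt_log hKR hM
    rwa [Real.log_mul (ne_of_gt hKpos) (ne_of_gt hRpos)] at this
  have orbit := orbit_bounds A B K hK4 hstepb x0 hx0big
  set L : ℝ := Real.log K with hL
  set h0 : ℝ := Real.log (HQr x0) with hh0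
  have hh0M : h0 = Real.log M := by rw [hh0, hHx0]
  have hh0big : L + Real.log (1 + |(A:ℝ)| + |(B:ℝ)|) < h0 := by
    rw [hh0, hL]; exact hx0big
  have hh0L : L < h0 := by linarith
  -- the point orbit
  set P := WeierstrassCurve.Affine.Point.some _ _ h with hP
  have pointOrbit : ∀ n : ℕ, ∃ (X Y : ℚ) (hns : (Ed A B d).Nonsingular X Y),
      (2^n : ℕ) • P = WeierstrassCurve.Affine.Point.some _ _ hns
        ∧ X = (d:ℚ) * ((stepQ A B)^[n] x0) ∧ Y ≠ 0 := by
    intro n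
    induction n with
    | zero =>
        refine ⟨(d:ℚ)*v/u, (d:ℚ)^2/u^2, h, by simp [hP], ?_, ?_⟩
        · rw [Function.iterate_zero_apply, hx0, mul_div_assoc]
        · exact div_ne_zero (pow_ne_zero 2 hdQ) (pow_ne_zero 2 huQ)
    | succ n ih =>
        obtain ⟨X, Y, hns, hPn, hX, hY⟩ := ih
        subst hX
        have hcubn := (orbit n).2
        have hcubn1 := (orbit (n+1)).2
        have hYne : Y ≠ (Ed A B d).negY ((d:ℚ) * ((stepQ A B)^[n] x0)) Y := by
          rw [Ed_negY]; intro hc; exact hY (by linarith)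
        have heqn : Y^2 = ((d:ℚ) * ((stepQ A B)^[n] x0))^3
            + (A:ℚ)*(d:ℚ)^2*((d:ℚ) * ((stepQ A B)^[n] x0)) + (B:ℚ)*(d:ℚ)^3 :=
          (Ed_equation_iff A B d _ _).mp hns.1
        have hdl : (2^(n+1) : ℕ) • P
            = WeierstrassCurve.Affine.Point.some _ _ hns + WeierstrassCurve.Affine.Point.some _ _ hns := by
          rw [pow_succ, mul_nsmul, hPn, two_nsmul]
        rw [WeierstrassCurve.Affine.Point.add_self_of_Y_ne hYne] at hdl
        have hXeq : (Ed A B d).addX ((d:ℚ) * ((stepQ A B)^[n] x0)) ((d:ℚ) * ((stepQ A B)^[n] x0))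
            ((Ed A B d).slope ((d:ℚ) * ((stepQ A B)^[n] x0)) ((d:ℚ) * ((stepQ A B)^[n] x0)) Y Y)
            = (d:ℚ) * ((stepQ A B)^[n+1] x0) := by
          rw [Ed_double A B d hdQ _ _ hcubn hY heqn, Function.iterate_succ_apply']
        refine ⟨_, _, _, hdl, hXeq, ?_⟩
        -- new Y ≠ 0
        intro hY0
        have hns' := WeierstrassCurve.Affine.nonsingular_add hns hns (fun h => hYne h.2)
        have heq' := (Ed_equation_iff A B d _ _).mp hns'.1
        rw [hY0, hXeq] at heq'
        have hcontra : ((d:ℚ) * ((stepQ A B)^[n+1] x0))^3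
            + (A:ℚ)*(d:ℚ)^2*((d:ℚ) * ((stepQ A B)^[n+1] x0)) + (B:ℚ)*(d:ℚ)^3 ≠ 0 := by
          have hgr : ((d:ℚ) * ((stepQ A B)^[n+1] x0))^3
              + (A:ℚ)*(d:ℚ)^2*((d:ℚ) * ((stepQ A B)^[n+1] x0)) + (B:ℚ)*(d:ℚ)^3
              = (d:ℚ)^3*(((stepQ A B)^[n+1] x0)^3 + (A:ℚ)*((stepQ A B)^[n+1] x0) + (B:ℚ)) := by
            ring
          rw [hgr]
          exact mul_ne_zero (pow_ne_zero _ hdQ) hcubn1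
        apply hcontra
        rw [← heq']
        norm_num
  -- injectivity of the orbit
  have hξlt : ∀ a b : ℕ, a < b → (stepQ A B)^[a] x0 ≠ (stepQ A B)^[b] x0 := by
    intro a b hlt hEq
    have h1 := (orbit a).1.2
    have h2 := (orbit b).1.1
    rw [hEq] at h1
    have h4ab : (4:ℝ)^(a+1) ≤ 4^b := pow_le_pow_right₀ (by norm_num) hlt
    have h4a : (1:ℝ) ≤ 4^a := one_le_pow₀ (by norm_num)
    have hnn : (0:ℝ) ≤ h0 - L/3 := by linarith
    have hmono := mul_le_mul_of_nonneg_right h4ab hnn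
    rw [pow_succ] at hmono
    have hpos : (0:ℝ) < 3*h0 - 5*L/3 := by linarith
    have hfin : (3*h0 - 5*L/3) ≤ 4^a * (3*h0 - 5*L/3) := le_mul_of_one_le_left (le_of_lt hpos) h4a
    nlinarith [h1, h2, hmono, hfin]
  have hPinj : Function.Injective fun n : ℕ => (2^n : ℕ) • P := by
    intro a b hab
    by_contra hne
    obtain ⟨Xa, Ya, hnsa, ha, hXa, _⟩ := pointOrbit a
    obtain ⟨Xb, Yb, hnsb, hb, hXb, _⟩ := pointOrbit b
    simp only at hab
    rw [ha, hb] at hab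
    injection hab with h1 h2
    rw [hXa, hXb] at h1
    have hξeq := mul_left_cancel₀ hdQ h1
    rcases Nat.lt_or_ge a b with hlt | hge
    · exact hξlt a b hlt hξeq
    · rcases Nat.lt_or_ge b a with hlt' | hge'
      · exact hξlt b a hlt' hξeq.symm
      · exact hne (le_antisymm hge' hge)
  have hnotfin : ¬ IsOfFinAddOrder P := by
    intro hfin
    obtain ⟨m, hm0, hmP⟩ := isOfFinAddOrder_iff_nsmul_eq_zero.mp hfin
    have hrange : Set.range (fun n : ℕ => (2^n : ℕ) • P) ⊆ (fun r : ℕ => r • P) '' (Set.Iio m) := by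
      rintro _ ⟨n, rfl⟩
      refine ⟨2^n % m, Nat.mod_lt _ hm0, ?_⟩
      simp only
      conv_rhs => rw [show (2^n : ℕ) = m * (2^n / m) + 2^n % m from (Nat.div_add_mod _ _).symm]
      rw [add_nsmul, mul_nsmul, hmP, smul_zero, zero_add]
    have hfinrange : (Set.range (fun n : ℕ => (2^n : ℕ) • P)).Finite :=
      Set.Finite.subset ((Set.finite_Iio m).image _) hrange
    exact (Set.infinite_range_of_injective hPinj) hfinrange
  refine ⟨hnotfin, ?_⟩
  -- the height sequence
  set s : ℕ → ℝ := fun n => Real.log (HQr ((stepQ A B)^[n] x0)) / 4^n with hs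
  have hcauchy : CauchySeq s := by
    apply cauchySeq_of_le_geometric (1/4 : ℝ) L (by norm_num)
    intro n
    have hGne : Gq A B ((stepQ A B)^[n] x0).num ((stepQ A B)^[n] x0).den ≠ 0 :=
      (Gq_ne_iff A B _).mpr (orbit n).2
    have hstepl := step_log A B K hK4 hstepb _ hGne
    rw [← Function.iterate_succ_apply' (stepQ A B) n x0] at hstepl
    have h4n : (0:ℝ) < (4:ℝ)^n := by positivity
    have h4n1 : (0:ℝ) < (4:ℝ)^(n+1) := by positivity
    rw [Real.dist_eq, hs]
    simp only
    have heq : Real.log (HQr ((stepQ A B)^[n] x0)) / 4^n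
        - Real.log (HQr ((stepQ A B)^[n+1] x0)) / 4^(n+1)
        = -((Real.log (HQr ((stepQ A B)^[n+1] x0))
            - 4 * Real.log (HQr ((stepQ A B)^[n] x0))) / 4^(n+1)) := by
      field_simp
      ring
    rw [heq, abs_neg, abs_div, abs_of_pos h4n1]
    calc |Real.log (HQr ((stepQ A B)^[n+1] x0)) - 4 * Real.log (HQr ((stepQ A B)^[n] x0))| / 4^(n+1)
        ≤ L / 4^(n+1) := by gcongr <;> exact hstepl
    _ ≤ L * (1/4)^n := by
        have hL4 : L * (1/4:ℝ)^n = L / 4^n := by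
          rw [one_div, inv_pow]; ring
        rw [hL4]
        gcongr
        all_goals first | exact hL0 | norm_num
  obtain ⟨l, hl⟩ := cauchySeq_tendsto_of_complete hcauchy
  have hub : ∀ n, s n ≤ h0 + L/3 := by
    intro n
    have h2 := (orbit n).1.2
    have h4n : (0:ℝ) < (4:ℝ)^n := by positivity
    rw [hs]
    simp only
    rw [div_le_iff₀ h4n]
    nlinarith [h2, hL0]
  have hlub : l ≤ h0 + L/3 := le_of_tendsto' hl hub
  have hdiff : Tendsto (fun n => hxQ ((d:ℚ) * ((stepQ A B)^[n] x0)) / 4^n - s n) atTop (𝓝 0) := by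
    apply squeeze_zero_norm (a := fun n => Real.log |(d:ℝ)| * (1/4)^n) ?_ ?_
    · intro n
      have hshift := log_shift d hd0 ((stepQ A B)^[n] x0)
      have h4n : (0:ℝ) < (4:ℝ)^n := by positivity
      rw [hs]
      simp only
      rw [hxQ_eq]
      calc ‖Real.log (HQr ((d:ℚ) * ((stepQ A B)^[n] x0))) / 4^n
            - Real.log (HQr ((stepQ A B)^[n] x0))/4^n‖
          = |Real.log (HQr ((d:ℚ) * ((stepQ A B)^[n] x0)))
              - Real.log (HQr ((stepQ A B)^[n] x0))| / 4^n := by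
            rw [Real.norm_eq_abs, ← sub_div, abs_div, abs_of_pos h4n]
      _ ≤ Real.log |(d:ℝ)| / 4^n := by gcongr <;> exact hshift
      _ = Real.log |(d:ℝ)| * (1/4)^n := by
            rw [one_div, inv_pow]; ring
    · have := (tendsto_pow_atTop_nhds_zero_of_lt_one (by norm_num : (0:ℝ) ≤ 1/4)
        (by norm_num : (1/4:ℝ) < 1)).const_mul (Real.log |(d:ℝ)|)
      simpa using this
  have ht : Tendsto (fun n => hxQ ((d:ℚ) * ((stepQ A B)^[n] x0)) / 4^n) atTop (𝓝 l) := by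
    have hsum := hl.add hdiff
    rw [add_zero] at hsum
    have hfe : (fun n => hxQ ((d:ℚ) * ((stepQ A B)^[n] x0)) / 4^n)
        = fun n => s n + (hxQ ((d:ℚ) * ((stepQ A B)^[n] x0)) / 4^n - s n) := by
      funext n; ring
    rw [hfe]
    exact hsum
  have hteq : (fun n : ℕ => hxPoint ((2^n : ℕ) • P) / 4^n)
      = fun n => hxQ ((d:ℚ) * ((stepQ A B)^[n] x0)) / 4^n := by
    funext n
    obtain ⟨X, Y, hns, hPn, hX, _⟩ := pointOrbit n
    rw [hPn, hxPoint_some, hX]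
  have hcan : canHeight P = l / 2 := by
    simp only [canHeight]
    rw [hteq, ht.limUnder_eq]
  rw [hcan]
  have hsqrtpos : (0:ℝ) < Real.sqrt M := Real.sqrt_pos.mpr hMpos
  have hlogsq : Real.log (K * Real.sqrt M) = L + Real.log M / 2 := by
    rw [Real.log_mul (ne_of_gt hKpos) (ne_of_gt hsqrtpos), Real.log_sqrt (le_of_lt hMpos), hL]
  rw [hlogsq]
  linarith [hlub, hL0, hh0M.le, hh0M.ge]
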